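/- Let α be a type and let w be a freely reduced word over α × Bool. Let k be a natural number with k ≤ |w| such that the length-k prefix of w equals the length-k prefix of inv(w), and suppose k is maximal in the sense that either k = |w| or the letter of w in position k differs from the letter of inv(w) in position k. Then 2k ≤ |w|; the word c = w[k:|w|−k] (w with its first k and last k letters deleted) is cyclically reduced; and FreeGroup.mk w = FreeGroup.mk (w[:k]) * FreeGroup.mk c * (FreeGroup.mk (w[:k]))⁻¹ in the free group on α. -/

import Mathlib

/-- A word over `α × Bool` is freely reduced if it contains no adjacent pair
`(x, b) (x, !b)`. -/
def Reduced {α : Type*} (w : List (α × Bool)) : Prop :=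
  ∀ (x : α) (b : Bool), ¬ ([(x, b), (x, !b)] <:+: w)

/-- A word over `α × Bool` is cyclically reduced if all of its rotations are
freely reduced. -/
def CyclicallyReduced {α : Type*} (w : List (α × Bool)) : Prop :=
  ∀ n : ℕ, Reduced (w.rotate n)

/-- The formal inverse of a word over `α × Bool`: the reverse of the word with
every letter's Boolean component negated. -/
def invWord {α : Type*} (w : List (α × Bool)) : List (α × Bool) :=
  (w.map fun p => (p.1, !p.2)).reverse

theorem pair_infix_of_getElem {β : Type*} {l : List β} {i : ℕ} (h : i + 1 < l.length) :
    [l[i], l[i+1]] <:+: l := by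
  have h1 : i < l.length := by omega
  have heq : [l[i], l[i+1]] = (l.drop i).take 2 := by
    rw [List.drop_eq_getElem_cons h1, List.drop_eq_getElem_cons h]
    rfl
  rw [heq]
  exact (List.take_prefix 2 (l.drop i)).isInfix.trans (List.drop_suffix i l).isInfix

theorem getElem?_of_pair_infix {β : Type*} {a b : β} {l : List β} (h : [a, b] <:+: l) :
    ∃ i, l[i]? = some a ∧ l[i+1]? = some b := by
  obtain ⟨s, t, rfl⟩ := h
  refine ⟨s.length, ?_, ?_⟩
  · rw [List.append_assoc, List.getElem?_append_right le_rfl]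
    simp
  · rw [List.append_assoc, List.getElem?_append_right (by omega)]
    simp

theorem reduced_iff {α : Type*} {w : List (α × Bool)} :
    Reduced w ↔ ∀ i, (h : i + 1 < w.length) → w[i+1] ≠ (w[i].1, !w[i].2) := by
  constructor
  · intro hw i h heq
    have hpair : [(w[i].1, w[i].2), (w[i].1, !w[i].2)] = [w[i], w[i+1]] := by
      rw [← heq]
    exact hw w[i].1 w[i].2 (hpair ▸ pair_infix_of_getElem h)
  · intro h x b hinf
    obtain ⟨i, h1, h2⟩ := getElem?_of_pair_infix hinf
    have hi1 : i + 1 < w.length := by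
      by_contra hc
      rw [List.getElem?_eq_none (by omega)] at h2
      simp at h2
    rw [List.getElem?_eq_getElem (by omega)] at h1
    rw [List.getElem?_eq_getElem hi1] at h2
    apply h i hi1
    rw [Option.some_inj.mp h2, Option.some_inj.mp h1]

theorem cyclicallyReduced_of {α : Type*} {u : List (α × Bool)} (h1 : Reduced u)
    (h2 : ∀ i j, (hi : i < u.length) → (hj : j < u.length) → i = 0 → j = u.length - 1 →
      u[i] ≠ ((u[j]).1, !(u[j]).2)) :
    CyclicallyReduced u := by
  intro n
  rw [reduced_iff]
  intro i hi
  rw [List.length_rotate] at hi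
  have hc : 0 < u.length := by omega
  rw [List.getElem_rotate, List.getElem_rotate]
  have hj : (i + n) % u.length < u.length := Nat.mod_lt _ hc
  have hstep : (i + 1 + n) % u.length = ((i + n) % u.length + 1) % u.length := by
    rw [Nat.mod_add_mod]
    congr 1
    omega
  by_cases hcase : (i + n) % u.length + 1 < u.length
  · have heq : (i + 1 + n) % u.length = (i + n) % u.length + 1 := by
      rw [hstep, Nat.mod_eq_of_lt hcase]
    simp only [heq]
    exact reduced_iff.mp h1 _ hcase
  · have hlast : (i + n) % u.length = u.length - 1 := by omega
    have heq : (i + 1 + n) % u.length = 0 := by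
      rw [hstep, hlast]
      have : u.length - 1 + 1 = u.length := by omega
      rw [this, Nat.mod_self]
    simp only [heq, hlast]
    exact h2 0 (u.length - 1) hc (by omega) rfl rfl

theorem cyclic_reduction {α : Type*} (w : List (α × Bool)) (hw : Reduced w)
    (k : ℕ) (hk : k ≤ w.length)
    (hpre : w.take k = (invWord w).take k)
    (hmax : k = w.length ∨ w[k]? ≠ (invWord w)[k]?) :
    2 * k ≤ w.length ∧
      CyclicallyReduced ((w.take (w.length - k)).drop k) ∧
      FreeGroup.mk w =
        FreeGroup.mk (w.take k) * FreeGroup.mk ((w.take (w.length - k)).drop k) *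
          (FreeGroup.mk (w.take k))⁻¹ := by
  have hinvE : ∀ i, i < w.length →
      (invWord w)[i]? = (w[w.length - 1 - i]?).map (fun p => (p.1, !p.2)) := by
    intro i hin
    unfold invWord
    rw [List.getElem?_reverse (by simpa using hin), List.getElem?_map]
    simp
  have hpt : ∀ i, i < k → w[i]? = (w[w.length - 1 - i]?).map (fun p => (p.1, !p.2)) := by
    intro i hik
    have hin : i < w.length := lt_of_lt_of_le hik hk
    have h := congrArg (fun l => l[i]?) hpre
    simp only [List.getElem?_take, if_pos hik] at h
    rw [h, hinvE i hin]
  -- elementwise version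
  have hptE : ∀ i, i < k → ∀ (h1 : i < w.length) (h2 : w.length - 1 - i < w.length),
      w[i] = ((w[w.length - 1 - i]).1, !(w[w.length - 1 - i]).2) := by
    intro i hik h1 h2
    have := hpt i hik
    rw [List.getElem?_eq_getElem h1, List.getElem?_eq_getElem h2] at this
    simpa using this
  have h2k : 2 * k ≤ w.length := by
    by_contra h2k
    push_neg at h2k
    rcases Nat.even_or_odd w.length with ⟨m, hm⟩ | ⟨m, hm⟩
    · -- even : length = m + m, m ≥ 1
      have hm1 : 1 ≤ m := by omega
      have heq := hptE (m - 1) (by omega) (by omega) (by omega)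
      have hidx : w.length - 1 - (m - 1) = m := by omega
      simp only [hidx] at heq
      apply reduced_iff.mp hw (m - 1) (by omega)
      simp only [show m - 1 + 1 = m by omega]
      simp [heq]
    · -- odd : length = 2m+1
      have heq := hptE m (by omega) (by omega) (by omega)
      have hidx : w.length - 1 - m = m := by omega
      simp only [hidx] at heq
      have := congrArg Prod.snd heq
      simp at this
  refine ⟨h2k, ?_, ?_⟩
  · -- cyclically reduced
    have hclen : ((w.take (w.length - k)).drop k).length = w.length - 2 * k := by
      simp
      omega
    have hcE : ∀ i (h : i < ((w.take (w.length - k)).drop k).length),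
        ((w.take (w.length - k)).drop k)[i] = w[k + i]'(by rw [hclen] at h; omega) := by
      intro i h
      rw [List.getElem_drop, List.getElem_take]
    apply cyclicallyReduced_of
    · rw [reduced_iff]
      intro i hi
      rw [hcE, hcE]
      simp only [show k + (i + 1) = (k + i) + 1 by omega]
      exact reduced_iff.mp hw (k + i) (by rw [hclen] at hi; omega)
    · intro i j hi hj hi0 hj1 heq
      subst hi0; subst hj1
      have hL : 0 < ((w.take (w.length - k)).drop k).length := hi
      rw [hclen] at hL
      have hkn : k < w.length := by omega
      have hne : w[k]? ≠ (invWord w)[k]? := by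
        rcases hmax with h | h
        · omega
        · exact h
      apply hne
      rw [hinvE k hkn]
      rw [hcE, hcE] at heq
      have hidx1 : k + 0 = k := by omega
      have hidx2 : k + (((w.take (w.length - k)).drop k).length - 1) = w.length - k - 1 := by
        rw [hclen]; omega
      rw [List.getElem?_eq_getElem hkn,
        List.getElem?_eq_getElem (show w.length - 1 - k < w.length by omega)]
      simp only [hidx1, hidx2] at heq
      simp only [Option.map_some]
      simp only [show w.length - 1 - k = w.length - k - 1 by omega]
      exact congrArg some heq
  · -- group identity
    have hsuffix : w.drop (w.length - k) = invWord (w.take k) := by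
      apply List.ext_getElem
      · simp [invWord]
        omega
      · intro i h1 h2
        have hik : i < k := by simp at h1; omega
        show (List.drop (w.length - k) w)[i] = ((List.map (fun p => (p.1, !p.2)) (List.take k w)).reverse)[i]'(by simpa [invWord] using h2)
        rw [List.getElem_reverse, List.getElem_map, List.getElem_drop, List.getElem_take]
        simp only [List.length_map, List.length_take]
        have hidx : min k w.length - 1 - i = k - 1 - i := by omega
        simp only [hidx]
        have heq := hptE (k - 1 - i) (by omega) (by omega) (by omega)
        have hidx2 : w.length - 1 - (k - 1 - i) = w.length - k + i := by omega
        simp only [hidx2] at heq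
        simp [heq]
    have hkk : k ≤ w.length - k := by omega
    have hsplit : w.take (w.length - k) = w.take k ++ (w.take (w.length - k)).drop k := by
      conv_lhs => rw [← List.take_append_drop k (w.take (w.length - k))]
      rw [List.take_take, min_eq_left hkk]
    have hsuffix' : w.drop (w.length - k) = FreeGroup.invRev (w.take k) := hsuffix
    rw [FreeGroup.inv_mk, FreeGroup.mul_mk, FreeGroup.mul_mk]
    congr 1
    rw [List.append_assoc, ← hsuffix', ← List.append_assoc, ← hsplit, List.take_append_drop]
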